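/- arXiv:1812.05753 — 3 statements merged into one kernel-verified Lean document; each statement's English description precedes it below -/
import Mathlib

section
/- The dual-real derivative at a point is unique: if λ₁ and λ₂ are ℝ[ε]-module maps ℝ[ε]ⁿ → ℝ[ε]ᵐ both satisfying ‖f(x)-f(a)-λᵢ(x-a)‖/‖x-a‖ → 0 as x → a, then λ₁ = λ₂. -/
noncomputable section

abbrev D : Type := DualNumber ℝ

def dnorm {n : ℕ} (x : Fin n → D) : ℝ :=
  Real.sqrt (2 * ∑ i, (x i).fst ^ 2 + ∑ i, (x i).snd ^ 2)

/-- `f` is dual-real differentiable at `a` with dual real derivative the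
`ℝ[ε]`-module map `lam`. -/
def HasDD {n m : ℕ} (f : (Fin n → D) → (Fin m → D))
    (lam : (Fin n → D) →ₗ[D] (Fin m → D)) (a : Fin n → D) : Prop :=
  ∀ e : ℝ, 0 < e → ∃ d : ℝ, 0 < d ∧ ∀ x : Fin n → D,
    0 < dnorm (x - a) → dnorm (x - a) < d →
      dnorm (f x - f a - lam (x - a)) < e * dnorm (x - a)

namespace DnormAux

def emb {n : ℕ} (x : Fin n → D) : EuclideanSpace ℝ (Fin n ⊕ Fin n) :=
  WithLp.toLp 2 (Sum.elim (fun i => Real.sqrt 2 * (x i).fst) (fun i => (x i).snd))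

lemma dnorm_eq_norm {n : ℕ} (x : Fin n → D) : dnorm x = ‖emb x‖ := by
  rw [EuclideanSpace.norm_eq, dnorm]
  congr 1
  rw [Fintype.sum_sum_type]
  simp only [emb, WithLp.ofLp_toLp, Sum.elim_inl, Sum.elim_inr, Real.norm_eq_abs, sq_abs, mul_pow,
    Real.sq_sqrt (by norm_num : (0:ℝ) ≤ 2)]
  rw [Finset.mul_sum]

lemma emb_add {n : ℕ} (x y : Fin n → D) : emb (x + y) = emb x + emb y := by
  ext i
  cases i <;> simp [emb, mul_add]

lemma emb_neg {n : ℕ} (x : Fin n → D) : emb (-x) = -emb x := by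
  ext i
  cases i <;> simp [emb]

lemma dnorm_nonneg {n : ℕ} (x : Fin n → D) : 0 ≤ dnorm x := Real.sqrt_nonneg _

lemma dnorm_triangle {n : ℕ} (x y : Fin n → D) :
    dnorm (x + y) ≤ dnorm x + dnorm y := by
  rw [dnorm_eq_norm, dnorm_eq_norm, dnorm_eq_norm, emb_add]
  exact norm_add_le _ _

lemma dnorm_neg {n : ℕ} (x : Fin n → D) : dnorm (-x) = dnorm x := by
  rw [dnorm_eq_norm, dnorm_eq_norm, emb_neg, norm_neg]

lemma dnorm_eq_zero_iff {n : ℕ} (x : Fin n → D) : dnorm x = 0 ↔ x = 0 := by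
  rw [dnorm_eq_norm, norm_eq_zero]
  constructor
  · intro h
    funext i
    have h1 := congrArg (fun z => z (Sum.inl i)) h
    have h2 := congrArg (fun z => z (Sum.inr i)) h
    simp only [emb, PiLp.toLp_apply, PiLp.zero_apply, Sum.elim_inl, Sum.elim_inr] at h1 h2
    have hs : Real.sqrt 2 ≠ 0 := by positivity
    ext
    · exact (mul_eq_zero.mp h1).resolve_left hs
    · exact h2
  · rintro rfl
    ext i
    cases i <;> simp [emb]

lemma dnorm_smul_real {n : ℕ} (t : ℝ) (x : Fin n → D) :
    dnorm ((TrivSqZeroExt.inl t : D) • x) = |t| * dnorm x := by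
  have hfst : ∀ i, (((TrivSqZeroExt.inl t : D) • x) i).fst = t * (x i).fst := by
    intro i
    simp [Pi.smul_apply, smul_eq_mul]
  have hsnd : ∀ i, (((TrivSqZeroExt.inl t : D) • x) i).snd = t * (x i).snd := by
    intro i
    simp [Pi.smul_apply, smul_eq_mul, TrivSqZeroExt.snd_mul]
  unfold dnorm
  simp only [hfst, hsnd, mul_pow]
  have key : 2 * ∑ i, t ^ 2 * (x i).fst ^ 2 + ∑ i, t ^ 2 * (x i).snd ^ 2
      = t ^ 2 * (2 * ∑ i, (x i).fst ^ 2 + ∑ i, (x i).snd ^ 2) := by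
    rw [mul_add, ← Finset.mul_sum, ← Finset.mul_sum]; ring
  rw [key, Real.sqrt_mul (sq_nonneg t), Real.sqrt_sq_eq_abs]

end DnormAux

theorem dual_derivative_unique {n m : ℕ}
    (f : (Fin n → D) → (Fin m → D)) (a : Fin n → D)
    (lam₁ lam₂ : (Fin n → D) →ₗ[D] (Fin m → D))
    (h₁ : HasDD f lam₁ a) (h₂ : HasDD f lam₂ a) : lam₁ = lam₂ := by
  apply LinearMap.ext
  intro v
  by_cases hv : v = 0
  · simp [hv]
  have hvpos : 0 < dnorm v := by
    rcases (DnormAux.dnorm_nonneg v).lt_or_eq with h | h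
    · exact h
    · exact absurd ((DnormAux.dnorm_eq_zero_iff v).mp h.symm) hv
  have key : ∀ e : ℝ, 0 < e → dnorm (lam₁ v - lam₂ v) < 2 * e * dnorm v := by
    intro e he
    obtain ⟨d₁, hd₁, H₁⟩ := h₁ e he
    obtain ⟨d₂, hd₂, H₂⟩ := h₂ e he
    set t : ℝ := min d₁ d₂ / (2 * dnorm v) with ht
    have htpos : 0 < t := by
      apply div_pos (lt_min hd₁ hd₂); positivity
    set x : Fin n → D := a + (TrivSqZeroExt.inl t : D) • v with hx
    have hxa : x - a = (TrivSqZeroExt.inl t : D) • v := by simp [hx]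
    have hdxa : dnorm (x - a) = t * dnorm v := by
      rw [hxa, DnormAux.dnorm_smul_real, abs_of_pos htpos]
    have hpos : 0 < dnorm (x - a) := by rw [hdxa]; positivity
    have hhalf : t * dnorm v = min d₁ d₂ / 2 := by
      rw [ht]; field_simp
    have hlt : dnorm (x - a) < min d₁ d₂ := by
      rw [hdxa, hhalf]
      exact half_lt_self (lt_min hd₁ hd₂)
    have E₁ := H₁ x hpos (hlt.trans_le (min_le_left _ _))
    have E₂ := H₂ x hpos (hlt.trans_le (min_le_right _ _))
    have hdiff : lam₁ (x - a) - lam₂ (x - a)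
        = (f x - f a - lam₂ (x - a)) - (f x - f a - lam₁ (x - a)) := by abel
    have tri : dnorm (lam₁ (x - a) - lam₂ (x - a))
        ≤ dnorm (f x - f a - lam₂ (x - a)) + dnorm (f x - f a - lam₁ (x - a)) := by
      rw [hdiff, sub_eq_add_neg]
      exact (DnormAux.dnorm_triangle _ _).trans
        (by rw [DnormAux.dnorm_neg])
    have hsmul : lam₁ (x - a) - lam₂ (x - a)
        = (TrivSqZeroExt.inl t : D) • (lam₁ v - lam₂ v) := by
      rw [hxa, map_smul, map_smul, smul_sub]
    have hval : dnorm (lam₁ (x - a) - lam₂ (x - a))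
        = t * dnorm (lam₁ v - lam₂ v) := by
      rw [hsmul, DnormAux.dnorm_smul_real, abs_of_pos htpos]
    have : t * dnorm (lam₁ v - lam₂ v) < 2 * e * (t * dnorm v) := by
      rw [← hval, ← hdxa]
      calc dnorm (lam₁ (x - a) - lam₂ (x - a))
          ≤ dnorm (f x - f a - lam₂ (x - a)) + dnorm (f x - f a - lam₁ (x - a)) := tri
        _ < e * dnorm (x - a) + e * dnorm (x - a) := add_lt_add E₂ E₁
        _ = 2 * e * dnorm (x - a) := by ring
    have := (mul_lt_mul_iff_right₀ htpos).mp (by linarith : t * dnorm (lam₁ v - lam₂ v) < t * (2 * e * dnorm v))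
    linarith
  have hC : dnorm (lam₁ v - lam₂ v) = 0 := by
    by_contra hC0
    have hCpos : 0 < dnorm (lam₁ v - lam₂ v) :=
      (DnormAux.dnorm_nonneg _).lt_of_ne (Ne.symm hC0)
    have hk := key (dnorm (lam₁ v - lam₂ v) / (4 * dnorm v)) (by positivity)
    have h2 : 2 * (dnorm (lam₁ v - lam₂ v) / (4 * dnorm v)) * dnorm v
        = dnorm (lam₁ v - lam₂ v) / 2 := by field_simp; ring
    rw [h2] at hk
    linarith
  exact sub_eq_zero.mp ((DnormAux.dnorm_eq_zero_iff _).mp hC)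
end
end

section
/- Chain rule for dual-real differentiation: if f : ℝ[ε]ⁿ → ℝ[ε]ᵐ is dual-real differentiable at a with derivative Df(a), and g : ℝ[ε]ᵐ → ℝ[ε]ᵖ is dual-real differentiable at f(a) with derivative Dg(f(a)), then g∘f is dual-real differentiable at a with derivative Dg(f(a)) ∘ Df(a). -/
noncomputable section

def emb {n : ℕ} (x : Fin n → D) : EuclideanSpace ℝ (Fin n × Fin 2) :=
  WithLp.toLp 2 (fun q : Fin n × Fin 2 => if q.2 = 0 then Real.sqrt 2 * (x q.1).fst else (x q.1).snd)

lemma emb_add {n : ℕ} (x y : Fin n → D) : emb (x + y) = emb x + emb y := by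
  ext q
  simp only [emb, PiLp.toLp_apply, Pi.add_apply, TrivSqZeroExt.fst_add, TrivSqZeroExt.snd_add,
    PiLp.add_apply]
  split <;> ring

lemma dnorm_eq_norm {n : ℕ} (x : Fin n → D) : dnorm x = ‖emb x‖ := by
  rw [EuclideanSpace.norm_eq, dnorm]
  congr 1
  rw [Fintype.sum_prod_type, Finset.mul_sum, ← Finset.sum_add_distrib]
  refine Finset.sum_congr rfl fun i _ => ?_
  simp [emb, Fin.sum_univ_two, Real.norm_eq_abs, sq_abs, mul_pow,
    Real.sq_sqrt (by norm_num : (0:ℝ) ≤ 2)]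

lemma dnorm_nonneg {n : ℕ} (x : Fin n → D) : 0 ≤ dnorm x := Real.sqrt_nonneg _

lemma dnorm_zero {n : ℕ} : dnorm (0 : Fin n → D) = 0 := by
  simp [dnorm]

lemma dnorm_triangle {n : ℕ} (x y : Fin n → D) :
    dnorm (x + y) ≤ dnorm x + dnorm y := by
  rw [dnorm_eq_norm, dnorm_eq_norm, dnorm_eq_norm, emb_add]
  exact norm_add_le _ _

lemma eq_zero_of_dnorm_eq_zero {n : ℕ} {x : Fin n → D} (h : dnorm x = 0) :
    x = 0 := by
  rw [dnorm_eq_norm, norm_eq_zero] at h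
  funext i
  have h0 : Real.sqrt 2 * (x i).fst = 0 := by simpa [emb] using congrArg (fun v => v (i, 0)) h
  have h1 : (x i).snd = 0 := by simpa [emb] using congrArg (fun v => v (i, 1)) h
  have hs : Real.sqrt 2 ≠ 0 := by positivity
  rcases mul_eq_zero.mp h0 with h0 | h0
  · exact absurd h0 hs
  · exact TrivSqZeroExt.ext h0 h1

def dnorm1 (c : D) : ℝ := Real.sqrt (2 * c.fst ^ 2 + c.snd ^ 2)

lemma dnorm1_le_dnorm {n : ℕ} (x : Fin n → D) (j : Fin n) :
    dnorm1 (x j) ≤ dnorm x := by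
  apply Real.sqrt_le_sqrt
  have h1 : (x j).fst ^ 2 ≤ ∑ i, (x i).fst ^ 2 :=
    Finset.single_le_sum (f := fun i => (x i).fst ^ 2) (fun i _ => sq_nonneg _)
      (Finset.mem_univ j)
  have h2 : (x j).snd ^ 2 ≤ ∑ i, (x i).snd ^ 2 :=
    Finset.single_le_sum (f := fun i => (x i).snd ^ 2) (fun i _ => sq_nonneg _)
      (Finset.mem_univ j)
  nlinarith

lemma dnorm_smul_le {n : ℕ} (c : D) (v : Fin n → D) :
    dnorm (c • v) ≤ dnorm1 c * dnorm v := by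
  have key : 2 * ∑ i, ((c • v) i).fst ^ 2 + ∑ i, ((c • v) i).snd ^ 2 ≤
      (2 * c.fst ^ 2 + c.snd ^ 2) * (2 * ∑ i, (v i).fst ^ 2 + ∑ i, (v i).snd ^ 2) := by
    have comp : ∀ i, 2 * ((c • v) i).fst ^ 2 + ((c • v) i).snd ^ 2 ≤
        (2 * c.fst ^ 2 + c.snd ^ 2) * (2 * (v i).fst ^ 2 + (v i).snd ^ 2) := by
      intro i
      have hfst : ((c • v) i).fst = c.fst * (v i).fst := by
        simp [TrivSqZeroExt.fst_mul]
      have hsnd : ((c • v) i).snd = c.fst * (v i).snd + (v i).fst * c.snd := by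
        simp [TrivSqZeroExt.snd_mul]
        ring
      rw [hfst, hsnd]
      nlinarith [sq_nonneg (c.fst * (v i).snd - c.snd * (v i).fst),
        sq_nonneg (c.fst * (v i).fst), sq_nonneg (c.snd * (v i).snd)]
    calc 2 * ∑ i, ((c • v) i).fst ^ 2 + ∑ i, ((c • v) i).snd ^ 2
        = ∑ i, (2 * ((c • v) i).fst ^ 2 + ((c • v) i).snd ^ 2) := by
          rw [Finset.sum_add_distrib, Finset.mul_sum]
      _ ≤ ∑ i, (2 * c.fst ^ 2 + c.snd ^ 2) * (2 * (v i).fst ^ 2 + (v i).snd ^ 2) :=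
          Finset.sum_le_sum fun i _ => comp i
      _ = (2 * c.fst ^ 2 + c.snd ^ 2) * (2 * ∑ i, (v i).fst ^ 2 + ∑ i, (v i).snd ^ 2) := by
          rw [← Finset.mul_sum]; congr 1
          rw [Finset.sum_add_distrib, Finset.mul_sum]
  have hc : (0:ℝ) ≤ 2 * c.fst ^ 2 + c.snd ^ 2 := by positivity
  calc dnorm (c • v) ≤ Real.sqrt ((2 * c.fst ^ 2 + c.snd ^ 2) *
        (2 * ∑ i, (v i).fst ^ 2 + ∑ i, (v i).snd ^ 2)) := Real.sqrt_le_sqrt key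
    _ = dnorm1 c * dnorm v := Real.sqrt_mul hc _

lemma dnorm_sum_le {n : ℕ} {ι : Type} (s : Finset ι) (v : ι → Fin n → D) :
    dnorm (∑ j ∈ s, v j) ≤ ∑ j ∈ s, dnorm (v j) := by
  classical
  induction s using Finset.induction with
  | empty => simp [dnorm_zero]
  | insert j s hj ih =>
      rw [Finset.sum_insert hj, Finset.sum_insert hj]
      exact le_trans (dnorm_triangle _ _) (by linarith)

lemma exists_bound {n m : ℕ} (L : (Fin n → D) →ₗ[D] (Fin m → D)) :
    ∃ C : ℝ, 0 < C ∧ ∀ x, dnorm (L x) ≤ C * dnorm x := by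
  classical
  have hC : (0:ℝ) < (∑ j, dnorm (L (fun i => if j = i then 1 else 0))) + 1 := by
    have h : (0:ℝ) ≤ ∑ j, dnorm (L (fun i => if j = i then 1 else 0)) :=
      Finset.sum_nonneg (fun j _ => dnorm_nonneg _)
    linarith
  refine ⟨(∑ j, dnorm (L (fun i => if j = i then 1 else 0))) + 1, hC, fun x => ?_⟩
  have hx : x = ∑ j, x j • (fun i => if j = i then 1 else 0 : Fin n → D) :=
    pi_eq_sum_univ x
  calc dnorm (L x) = dnorm (∑ j, x j • L (fun i => if j = i then 1 else 0)) := by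
        conv_lhs => rw [hx]
        rw [map_sum]
        simp_rw [map_smul]
    _ ≤ ∑ j, dnorm (x j • L (fun i => if j = i then 1 else 0)) := dnorm_sum_le _ _
    _ ≤ ∑ j, dnorm1 (x j) * dnorm (L (fun i => if j = i then 1 else 0)) :=
        Finset.sum_le_sum fun j _ => dnorm_smul_le _ _
    _ ≤ ∑ j, dnorm x * dnorm (L (fun i => if j = i then 1 else 0)) :=
        Finset.sum_le_sum fun j _ =>
          mul_le_mul_of_nonneg_right (dnorm1_le_dnorm x j) (dnorm_nonneg _)
    _ = (∑ j, dnorm (L (fun i => if j = i then 1 else 0))) * dnorm x := by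
        rw [Finset.sum_mul]; exact Finset.sum_congr rfl fun j _ => mul_comm _ _
    _ ≤ ((∑ j, dnorm (L (fun i => if j = i then 1 else 0))) + 1) * dnorm x := by
        have := dnorm_nonneg x; nlinarith

/-- Chain rule for dual-real differentiation. -/
theorem dual_chain_rule {n m p : ℕ}
    (f : (Fin n → D) → (Fin m → D)) (g : (Fin m → D) → (Fin p → D))
    (a : Fin n → D)
    (Df : (Fin n → D) →ₗ[D] (Fin m → D)) (Dg : (Fin m → D) →ₗ[D] (Fin p → D))
    (hf : HasDD f Df a) (hg : HasDD g Dg (f a)) :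
    HasDD (g ∘ f) (Dg ∘ₗ Df) a := by
  obtain ⟨C, hC, hCb⟩ := exists_bound Dg
  obtain ⟨K, hK, hKb⟩ := exists_bound Df
  intro e he
  set e1 : ℝ := min 1 (e / (2 * C)) with he1def
  have he1 : 0 < e1 := lt_min one_pos (by positivity)
  have he1le : e1 ≤ 1 := min_le_left _ _
  have he1le' : e1 ≤ e / (2 * C) := min_le_right _ _
  set e2 : ℝ := e / (2 * (K + 1)) with he2def
  have he2 : 0 < e2 := by positivity
  obtain ⟨dg, hdg, hgb⟩ := hg e2 he2
  obtain ⟨df, hdf, hfb⟩ := hf e1 he1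
  refine ⟨min df (dg / (K + 1)), lt_min hdf (by positivity), fun x hx hxd => ?_⟩
  have hxdf : dnorm (x - a) < df := lt_of_lt_of_le hxd (min_le_left _ _)
  have hxdg : dnorm (x - a) < dg / (K + 1) := lt_of_lt_of_le hxd (min_le_right _ _)
  set r := dnorm (x - a) with hr
  have hr0 : 0 ≤ r := dnorm_nonneg _
  have h1 : dnorm (f x - f a - Df (x - a)) < e1 * r := hfb x hx hxdf
  have hDfb : dnorm (Df (x - a)) ≤ K * r := hKb _
  have hfxr : dnorm (f x - f a) ≤ (K + 1) * r := by
    have heq : f x - f a = (f x - f a - Df (x - a)) + Df (x - a) := by abel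
    rw [heq]
    have htri := dnorm_triangle (f x - f a - Df (x - a)) (Df (x - a))
    have h1r : e1 * r ≤ 1 * r := mul_le_mul_of_nonneg_right he1le hr0
    nlinarith
  have hfxdg : dnorm (f x - f a) < dg := by
    calc dnorm (f x - f a) ≤ (K + 1) * r := hfxr
      _ < (K + 1) * (dg / (K + 1)) := mul_lt_mul_of_pos_left hxdg (by linarith)
      _ = dg := by field_simp
  have hdecomp : (g ∘ f) x - (g ∘ f) a - (Dg ∘ₗ Df) (x - a) =
      (g (f x) - g (f a) - Dg (f x - f a)) + Dg (f x - f a - Df (x - a)) := by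
    simp only [Function.comp_apply, LinearMap.comp_apply, map_sub]
    abel
  have hterm2 : dnorm (Dg (f x - f a - Df (x - a))) ≤ (e / 2) * r := by
    have hce : C * e1 ≤ e / 2 := by
      have := mul_le_mul_of_nonneg_left he1le' hC.le
      have hrw : C * (e / (2 * C)) = e / 2 := by field_simp
      linarith [hrw ▸ this]
    calc dnorm (Dg (f x - f a - Df (x - a)))
        ≤ C * dnorm (f x - f a - Df (x - a)) := hCb _
      _ ≤ C * (e1 * r) := mul_le_mul_of_nonneg_left h1.le hC.le
      _ ≤ (e / 2) * r := by nlinarith [mul_le_mul_of_nonneg_right hce hr0]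
  have hterm1 : dnorm (g (f x) - g (f a) - Dg (f x - f a)) < (e / 2) * r := by
    rcases eq_or_lt_of_le (dnorm_nonneg (f x - f a)) with h0 | h0
    · have hfa : f x - f a = 0 := eq_zero_of_dnorm_eq_zero h0.symm
      have hfe : f x = f a := by rwa [sub_eq_zero] at hfa
      rw [hfe, sub_self, sub_self, zero_sub, map_zero, neg_zero, dnorm_zero]
      exact mul_pos (by linarith) hx
    · calc dnorm (g (f x) - g (f a) - Dg (f x - f a))
          < e2 * dnorm (f x - f a) := hgb _ h0 hfxdg
        _ ≤ e2 * ((K + 1) * r) := mul_le_mul_of_nonneg_left hfxr he2.le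
        _ = (e / 2) * r := by rw [he2def]; field_simp
  rw [hdecomp]
  calc dnorm ((g (f x) - g (f a) - Dg (f x - f a)) + Dg (f x - f a - Df (x - a)))
      ≤ dnorm (g (f x) - g (f a) - Dg (f x - f a))
        + dnorm (Dg (f x - f a - Df (x - a))) := dnorm_triangle _ _
    _ < e * r := by linarith
end
end

section
/- For a bounded function f : A → ℝ[ε] on a type 1 closed rectangle A, every type 1 lower sum is type-1 less than or equal to every type 1 upper sum: for all partitions P, Q of A, L₁(P,f) ≤₁ U₁(Q,f). -/
noncomputable section

/-- Type 1 (lexicographic) order: `x ≤₁ y`. -/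
def le1 (x y : D) : Prop := x.fst < y.fst ∨ (x.fst = y.fst ∧ x.snd ≤ y.snd)

/-- Strict type 1 order: `x <₁ y`. -/
def lt1 (x y : D) : Prop := x.fst < y.fst ∨ (x.fst = y.fst ∧ x.snd < y.snd)

/-- A partition of the type 1 closed interval `[a, b]₁`. -/
structure Partition1 (a b : D) where
  N : ℕ
  hN : 0 < N
  pts : Fin (N + 1) → D
  first : pts 0 = a
  last : pts (Fin.last N) = b
  mono : ∀ j : Fin N, lt1 (pts j.castSucc) (pts j.succ)

/-- The type 1 closed rectangle `[a¹,b¹]₁ × ⋯ × [aⁿ,bⁿ]₁`. -/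
def Rect {n : ℕ} (a b : Fin n → D) : Set (Fin n → D) :=
  {x | ∀ i, le1 (a i) (x i) ∧ le1 (x i) (b i)}

/-- A partition of the type 1 closed rectangle determined by `a` and `b`. -/
def MPart {n : ℕ} (a b : Fin n → D) : Type := ∀ i, Partition1 (a i) (b i)

/-- The type 1 closed subrectangle of the partition `P` with index `J`. -/
def subrect {n : ℕ} {a b : Fin n → D} (P : MPart a b)
    (J : ∀ i, Fin (P i).N) : Set (Fin n → D) :=
  {x | ∀ i, le1 ((P i).pts (J i).castSucc) (x i) ∧ le1 (x i) ((P i).pts (J i).succ)}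

/-- The dual real volume of the subrectangle with index `J`. -/
def vol {n : ℕ} {a b : Fin n → D} (P : MPart a b)
    (J : ∀ i, Fin (P i).N) : D :=
  ∏ i, ((P i).pts (J i).succ - (P i).pts (J i).castSucc)

/-- The type 1 upper sum `U₁(P, f)`. -/
def U1 {n : ℕ} {a b : Fin n → D} (P : MPart a b) (f : (Fin n → D) → D) : D :=
  ∑ J : (∀ i, Fin (P i).N),
    (TrivSqZeroExt.inl (sSup ((fun x => (f x).fst) '' subrect P J)) +
     TrivSqZeroExt.inr (sSup ((fun x => (f x).snd) '' subrect P J))) * vol P J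

/-- The type 1 lower sum `L₁(P, f)`. -/
def L1 {n : ℕ} {a b : Fin n → D} (P : MPart a b) (f : (Fin n → D) → D) : D :=
  ∑ J : (∀ i, Fin (P i).N),
    (TrivSqZeroExt.inl (sInf ((fun x => (f x).fst) '' subrect P J)) +
     TrivSqZeroExt.inr (sInf ((fun x => (f x).snd) '' subrect P J))) * vol P J

namespace Aux1

def e : D →+ Lex (ℝ × ℝ) where
  toFun x := toLex (x.fst, x.snd)
  map_zero' := rfl
  map_add' _ _ := rfl

lemma le1_iff (x y : D) : le1 x y ↔ e x ≤ e y := by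
  rw [le1]; exact Prod.Lex.le_iff.symm

lemma lt1_iff (x y : D) : lt1 x y ↔ e x < e y := by
  rw [lt1]; exact Prod.Lex.lt_iff.symm

lemma mul_nonneg1 {v w : D} (hv : le1 0 v) (hw : le1 0 w) : le1 0 (v * w) := by
  simp only [le1, TrivSqZeroExt.fst_zero, TrivSqZeroExt.snd_zero, TrivSqZeroExt.fst_mul,
    TrivSqZeroExt.snd_mul, op_smul_eq_mul, smul_eq_mul] at *
  rcases hv with hv | ⟨hv1, hv2⟩ <;> rcases hw with hw | ⟨hw1, hw2⟩
  · exact Or.inl (mul_pos hv hw)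
  · exact Or.inr ⟨by rw [← hw1, mul_zero], by rw [← hw1]; simpa using mul_nonneg hv.le hw2⟩
  · exact Or.inr ⟨by rw [← hv1, zero_mul], by rw [← hv1]; simpa using mul_nonneg hv2 hw.le⟩
  · exact Or.inr ⟨by rw [← hv1, zero_mul], by rw [← hv1, ← hw1]; simp⟩

lemma mul_le_mul_right1 {x y v : D} (h : le1 x y) (hv : le1 0 v) :
    le1 (x * v) (y * v) := by
  simp only [le1, TrivSqZeroExt.fst_zero, TrivSqZeroExt.snd_zero, TrivSqZeroExt.fst_mul,
    TrivSqZeroExt.snd_mul, op_smul_eq_mul, smul_eq_mul] at *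
  rcases h with h | ⟨h1, h2⟩ <;> rcases hv with hv | ⟨hv1, hv2⟩
  · exact Or.inl (mul_lt_mul_of_pos_right h hv)
  · refine Or.inr ⟨by rw [← hv1, mul_zero, mul_zero], ?_⟩
    rw [← hv1, mul_zero, mul_zero, add_zero, add_zero]
    exact mul_le_mul_of_nonneg_right h.le hv2
  · refine Or.inr ⟨by rw [h1], ?_⟩
    rw [h1]
    exact add_le_add le_rfl (mul_le_mul_of_nonneg_right h2 hv.le)
  · refine Or.inr ⟨by rw [h1], ?_⟩
    rw [h1, ← hv1, mul_zero, mul_zero]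

variable {aa bb : D}

lemma pts_strictMonoE (p : Partition1 aa bb) :
    StrictMono (fun j => e (p.pts j)) := by
  rw [Fin.strictMono_iff_lt_succ]
  intro i; exact (lt1_iff _ _).mp (p.mono i)

/-- `r` refines `p`. -/
structure Refines (p r : Partition1 aa bb) where
  map : Fin (p.N + 1) → Fin (r.N + 1)
  mono : StrictMono map
  zero : map 0 = 0
  last : map (Fin.last p.N) = Fin.last r.N
  comm : ∀ j, r.pts (map j) = p.pts j

variable {p r : Partition1 aa bb}

/-- the index of the `p`-subinterval containing `r`-subinterval `k`. -/
lemma Refines.idx_set_nonempty (R : Refines p r) (k : Fin r.N) :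
    (Finset.univ.filter (fun j : Fin p.N => (R.map j.castSucc : ℕ) ≤ (k : ℕ))).Nonempty := by
  refine ⟨⟨0, p.hN⟩, ?_⟩
  simp only [Finset.mem_filter, Finset.mem_univ, true_and]
  have h0 : (⟨0, p.hN⟩ : Fin p.N).castSucc = 0 := rfl
  rw [h0, R.zero]; exact Nat.zero_le _

def Refines.idx (R : Refines p r) (k : Fin r.N) : Fin p.N :=
  (Finset.univ.filter (fun j : Fin p.N => (R.map j.castSucc : ℕ) ≤ (k : ℕ))).max'
    (R.idx_set_nonempty k)

lemma Refines.idx_le (R : Refines p r) (k : Fin r.N) :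
    (R.map (R.idx k).castSucc : ℕ) ≤ (k : ℕ) := by
  have := Finset.max'_mem _ (R.idx_set_nonempty k)
  simp only [Finset.mem_filter, Finset.mem_univ, true_and] at this
  exact this

lemma Refines.lt_idx (R : Refines p r) (k : Fin r.N) :
    (k : ℕ) < (R.map (R.idx k).succ : ℕ) := by
  by_contra hcon
  push_neg at hcon
  by_cases hlast : (R.idx k).succ = Fin.last p.N
  · have heq : (R.map (R.idx k).succ : ℕ) = r.N := by rw [hlast, R.last, Fin.val_last]
    have := k.isLt
    omega
  · have hv : ((R.idx k : ℕ) + 1) < p.N := by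
      have h3 : ((R.idx k).succ : ℕ) = (R.idx k : ℕ) + 1 := rfl
      have h1 : ((R.idx k).succ : ℕ) ≠ (Fin.last p.N : ℕ) := fun h => hlast (Fin.ext h)
      have h2 : ((R.idx k).succ : ℕ) < p.N + 1 := (R.idx k).succ.isLt
      simp only [Fin.val_last] at h1
      omega
    set j' : Fin p.N := ⟨(R.idx k : ℕ) + 1, hv⟩ with hj'
    have hmem : j' ∈ Finset.univ.filter
        (fun j : Fin p.N => (R.map j.castSucc : ℕ) ≤ (k : ℕ)) := by
      simp only [Finset.mem_filter, Finset.mem_univ, true_and]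
      have : j'.castSucc = (R.idx k).succ := rfl
      rw [this]; exact hcon
    have := Finset.le_max' _ _ hmem
    have : (R.idx k : ℕ) + 1 ≤ (R.idx k : ℕ) := this
    omega

lemma Refines.idx_eq_iff (R : Refines p r) (k : Fin r.N) (j : Fin p.N) :
    R.idx k = j ↔ (R.map j.castSucc : ℕ) ≤ (k : ℕ) ∧ (k : ℕ) < (R.map j.succ : ℕ) := by
  constructor
  · rintro rfl; exact ⟨R.idx_le k, R.lt_idx k⟩
  · rintro ⟨h1, h2⟩
    rcases lt_trichotomy (R.idx k) j with h | h | h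
    · exfalso
      have hle : (R.idx k).succ ≤ j.castSucc := by
        rw [Fin.succ_le_castSucc_iff]; exact h
      have := R.mono.monotone hle
      have : (R.map (R.idx k).succ : ℕ) ≤ (R.map j.castSucc : ℕ) := this
      have := R.lt_idx k
      omega
    · exact h
    · exfalso
      have hle : j.succ ≤ (R.idx k).castSucc := by
        rw [Fin.succ_le_castSucc_iff]; exact h
      have := R.mono.monotone hle
      have : (R.map j.succ : ℕ) ≤ (R.map (R.idx k).castSucc : ℕ) := this
      have := R.idx_le k
      omega

end Aux1

namespace Aux1
variable {aa bb : D} {p r : Partition1 aa bb}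

lemma Refines.tele (R : Refines p r) (j : Fin p.N) :
    ∑ k ∈ Finset.univ.filter (fun k : Fin r.N => R.idx k = j),
      (r.pts k.succ - r.pts k.castSucc) = p.pts j.succ - p.pts j.castSucc := by
  classical
  set u : ℕ := (R.map j.castSucc : ℕ) with hu
  set v : ℕ := (R.map j.succ : ℕ) with hvdef
  have huv : u ≤ v := R.mono.monotone (Fin.castSucc_lt_succ (i := j)).le
  have hvN : v ≤ r.N := Nat.lt_succ_iff.mp (R.map j.succ).isLt
  set g : ℕ → D := fun m => if h : m < r.N + 1 then r.pts ⟨m, h⟩ else 0 with hg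
  have hgf : ∀ (m : ℕ) (h : m < r.N + 1), g m = r.pts ⟨m, h⟩ := fun m h => dif_pos h
  have key : ∑ k ∈ Finset.univ.filter (fun k : Fin r.N => R.idx k = j),
      (r.pts k.succ - r.pts k.castSucc) = ∑ m ∈ Finset.Ico u v, (g (m + 1) - g m) := by
    refine Finset.sum_bij' (fun k _ => (k : ℕ))
      (fun m hm => ⟨m, lt_of_lt_of_le (Finset.mem_Ico.mp hm).2 hvN⟩) ?_ ?_ ?_ ?_ ?_
    · intro k hk
      rw [Finset.mem_filter] at hk
      have := (R.idx_eq_iff k j).mp hk.2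
      exact Finset.mem_Ico.mpr this
    · intro m hm
      rw [Finset.mem_filter]
      refine ⟨Finset.mem_univ _, (R.idx_eq_iff _ j).mpr ?_⟩
      exact Finset.mem_Ico.mp hm
    · intro k _; rfl
    · intro m _; rfl
    · intro k _
      have h1 : ((k : ℕ) + 1) < r.N + 1 := Nat.succ_lt_succ k.isLt
      have h2 : (k : ℕ) < r.N + 1 := Nat.lt_succ_of_lt k.isLt
      rw [hgf _ h1, hgf _ h2]
      congr 1
  rw [key, Finset.sum_Ico_eq_sub _ huv, Finset.sum_range_sub, Finset.sum_range_sub]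
  have hgv : g v = p.pts j.succ := by
    rw [hgf v (Nat.lt_succ_of_le hvN), ← R.comm j.succ]
  have hgu : g u = p.pts j.castSucc := by
    rw [hgf u (Nat.lt_succ_of_le (huv.trans hvN)), ← R.comm j.castSucc]
  rw [hgv, hgu]
  abel

end Aux1

namespace Aux1
variable {aa bb : D}

def eInv (z : Lex (ℝ × ℝ)) : D :=
  TrivSqZeroExt.inl (ofLex z).1 + TrivSqZeroExt.inr (ofLex z).2

lemma eInv_e (x : D) : eInv (e x) = x := by
  show TrivSqZeroExt.inl x.fst + TrivSqZeroExt.inr x.snd = x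
  exact TrivSqZeroExt.inl_fst_add_inr_snd_eq x

lemma e_eInv (z : Lex (ℝ × ℝ)) : e (eInv z) = z := by
  show toLex ((eInv z).fst, (eInv z).snd) = z
  have h1 : (eInv z).fst = (ofLex z).1 := by simp [eInv]
  have h2 : (eInv z).snd = (ofLex z).2 := by simp [eInv]
  rw [h1, h2]
  rfl

variable (p q : Partition1 aa bb)

def clist : List (Lex (ℝ × ℝ)) :=
  ((Finset.univ.image (fun j => e (p.pts j))) ∪
   (Finset.univ.image (fun j => e (q.pts j)))).sort (· ≤ ·)

lemma clist_sorted : (clist p q).Pairwise (· < ·) := (Finset.sortedLT_sort _).pairwise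

lemma clist_nodup : (clist p q).Nodup := Finset.sort_nodup _ _

lemma mem_clist_left (j : Fin (p.N + 1)) : e (p.pts j) ∈ clist p q := by
  rw [clist, Finset.mem_sort, Finset.mem_union]
  exact Or.inl (Finset.mem_image_of_mem _ (Finset.mem_univ j))

lemma mem_clist_right (j : Fin (q.N + 1)) : e (q.pts j) ∈ clist p q := by
  rw [clist, Finset.mem_sort, Finset.mem_union]
  exact Or.inr (Finset.mem_image_of_mem _ (Finset.mem_univ j))

lemma aa_mem_clist : e aa ∈ clist p q := by
  have := mem_clist_left p q 0
  rwa [p.first] at this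

lemma bb_mem_clist : e bb ∈ clist p q := by
  have := mem_clist_left p q (Fin.last _)
  rwa [p.last] at this

lemma clist_bounds {z : Lex (ℝ × ℝ)} (hz : z ∈ clist p q) : e aa ≤ z ∧ z ≤ e bb := by
  rw [clist, Finset.mem_sort, Finset.mem_union] at hz
  rcases hz with hz | hz <;> rw [Finset.mem_image] at hz <;> obtain ⟨j, -, rfl⟩ := hz
  · constructor
    · have := (pts_strictMonoE p).monotone (Fin.zero_le j)
      simpa [p.first] using this
    · have := (pts_strictMonoE p).monotone (Fin.le_last j)
      simpa [p.last] using this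
  · constructor
    · have := (pts_strictMonoE q).monotone (Fin.zero_le j)
      simpa [q.first] using this
    · have := (pts_strictMonoE q).monotone (Fin.le_last j)
      simpa [q.last] using this

lemma e_aa_lt_bb (p : Partition1 aa bb) : e aa < e bb := by
  have h0 : (0 : Fin (p.N + 1)) < Fin.last p.N := by
    rw [Fin.lt_def]; simpa using p.hN
  have := pts_strictMonoE p h0
  simp only [] at this
  rwa [p.first, p.last] at this

lemma two_le_clist_length : 2 ≤ (clist p q).length := by
  by_contra h
  push_neg at h
  obtain ⟨ka, hka⟩ := List.mem_iff_get.mp (aa_mem_clist p q)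
  obtain ⟨kb, hkb⟩ := List.mem_iff_get.mp (bb_mem_clist p q)
  have hne : (ka : ℕ) ≠ (kb : ℕ) := by
    intro hv
    rw [Fin.ext hv, hkb] at hka
    exact absurd hka (ne_of_gt (e_aa_lt_bb p))
  have := ka.isLt
  have := kb.isLt
  omega

lemma clist_len : ((clist p q).length - 1) + 1 = (clist p q).length := by
  have := two_le_clist_length p q
  omega

lemma get_clist_zero (h : 0 < (clist p q).length) :
    (clist p q).get ⟨0, h⟩ = e aa := by
  obtain ⟨k, hk⟩ := List.mem_iff_get.mp (aa_mem_clist p q)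
  have h1 : (clist p q).get ⟨0, h⟩ ≤ e aa := by
    rw [← hk]
    exact (clist_sorted p q).sortedLT.strictMono_get.monotone
      (by rw [Fin.le_def]; exact Nat.zero_le _)
  exact le_antisymm h1 (clist_bounds p q (List.get_mem _ _)).1

lemma get_clist_last (h : (clist p q).length - 1 < (clist p q).length) :
    (clist p q).get ⟨(clist p q).length - 1, h⟩ = e bb := by
  obtain ⟨k, hk⟩ := List.mem_iff_get.mp (bb_mem_clist p q)
  have h1 : e bb ≤ (clist p q).get ⟨(clist p q).length - 1, h⟩ := by
    rw [← hk]
    refine (clist_sorted p q).sortedLT.strictMono_get.monotone ?_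
    rw [Fin.le_def]
    have := k.isLt
    simp only []
    omega
  exact le_antisymm (clist_bounds p q (List.get_mem _ _)).2 h1

end Aux1

namespace Aux1
variable {aa bb : D} (p q : Partition1 aa bb)

def common : Partition1 aa bb where
  N := (clist p q).length - 1
  hN := by have := two_le_clist_length p q; omega
  pts j := eInv ((clist p q).get (Fin.cast (clist_len p q) j))
  first := by
    have h0 : (0 : ℕ) < (clist p q).length := by have := two_le_clist_length p q; omega
    show eInv ((clist p q).get (Fin.cast (clist_len p q) 0)) = aa
    have hc : (Fin.cast (clist_len p q) (0 : Fin _)) = ⟨0, h0⟩ := rfl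
    rw [hc, get_clist_zero p q h0, eInv_e]
  last := by
    have hl : (clist p q).length - 1 < (clist p q).length := by
      have := two_le_clist_length p q; omega
    show eInv ((clist p q).get (Fin.cast (clist_len p q) (Fin.last _))) = bb
    have hc : (Fin.cast (clist_len p q) (Fin.last _)) = ⟨(clist p q).length - 1, hl⟩ := rfl
    rw [hc, get_clist_last p q hl, eInv_e]
  mono := by
    intro j
    rw [lt1_iff, e_eInv, e_eInv]
    refine (clist_sorted p q).sortedLT.strictMono_get ?_
    rw [Fin.lt_def]
    exact Nat.lt_succ_self _

def locIdx {z : Lex (ℝ × ℝ)} (hz : z ∈ clist p q) : Fin (clist p q).length :=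
  (List.mem_iff_get.mp hz).choose

lemma get_locIdx {z : Lex (ℝ × ℝ)} (hz : z ∈ clist p q) :
    (clist p q).get (locIdx p q hz) = z :=
  (List.mem_iff_get.mp hz).choose_spec

def refinesLeft : Refines p (common p q) where
  map j := Fin.cast (clist_len p q).symm (locIdx p q (mem_clist_left p q j))
  mono := by
    intro j j' hjj
    rw [Fin.lt_def]
    show (locIdx p q (mem_clist_left p q j) : ℕ) < (locIdx p q (mem_clist_left p q j') : ℕ)
    rw [← Fin.lt_def]
    refine (clist_sorted p q).sortedLT.strictMono_get.lt_iff_lt.mp ?_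
    rw [get_locIdx, get_locIdx]
    exact pts_strictMonoE p hjj
  zero := by
    have h0 : (0 : ℕ) < (clist p q).length := by have := two_le_clist_length p q; omega
    apply Fin.ext
    show (locIdx p q (mem_clist_left p q 0) : ℕ) = 0
    have hg0 : (clist p q).get ⟨0, h0⟩ = e (p.pts 0) := by
      rw [get_clist_zero p q h0, p.first]
    have := (clist_sorted p q).sortedLT.strictMono_get.injective
      ((get_locIdx p q (mem_clist_left p q 0)).trans hg0.symm)
    exact congrArg Fin.val this
  last := by
    have hl : (clist p q).length - 1 < (clist p q).length := by
      have := two_le_clist_length p q; omega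
    apply Fin.ext
    show (locIdx p q (mem_clist_left p q (Fin.last _)) : ℕ) = ((Fin.last ((common p q).N)) : ℕ)
    have hgl : (clist p q).get ⟨(clist p q).length - 1, hl⟩ = e (p.pts (Fin.last _)) := by
      rw [get_clist_last p q hl, p.last]
    have := (clist_sorted p q).sortedLT.strictMono_get.injective
      ((get_locIdx p q (mem_clist_left p q (Fin.last _))).trans hgl.symm)
    exact congrArg Fin.val this
  comm := by
    intro j
    show eInv ((clist p q).get (Fin.cast (clist_len p q)
      (Fin.cast (clist_len p q).symm (locIdx p q (mem_clist_left p q j))))) = p.pts j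
    have hc : (Fin.cast (clist_len p q)
        (Fin.cast (clist_len p q).symm (locIdx p q (mem_clist_left p q j)))) =
        locIdx p q (mem_clist_left p q j) := rfl
    rw [hc, get_locIdx, eInv_e]

def refinesRight : Refines q (common p q) where
  map j := Fin.cast (clist_len p q).symm (locIdx p q (mem_clist_right p q j))
  mono := by
    intro j j' hjj
    rw [Fin.lt_def]
    show (locIdx p q (mem_clist_right p q j) : ℕ) < (locIdx p q (mem_clist_right p q j') : ℕ)
    rw [← Fin.lt_def]
    refine (clist_sorted p q).sortedLT.strictMono_get.lt_iff_lt.mp ?_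
    rw [get_locIdx, get_locIdx]
    exact pts_strictMonoE q hjj
  zero := by
    have h0 : (0 : ℕ) < (clist p q).length := by have := two_le_clist_length p q; omega
    apply Fin.ext
    show (locIdx p q (mem_clist_right p q 0) : ℕ) = 0
    have hg0 : (clist p q).get ⟨0, h0⟩ = e (q.pts 0) := by
      rw [get_clist_zero p q h0, q.first]
    have := (clist_sorted p q).sortedLT.strictMono_get.injective
      ((get_locIdx p q (mem_clist_right p q 0)).trans hg0.symm)
    exact congrArg Fin.val this
  last := by
    have hl : (clist p q).length - 1 < (clist p q).length := by
      have := two_le_clist_length p q; omega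
    apply Fin.ext
    show (locIdx p q (mem_clist_right p q (Fin.last _)) : ℕ) = ((Fin.last ((common p q).N)) : ℕ)
    have hgl : (clist p q).get ⟨(clist p q).length - 1, hl⟩ = e (q.pts (Fin.last _)) := by
      rw [get_clist_last p q hl, q.last]
    have := (clist_sorted p q).sortedLT.strictMono_get.injective
      ((get_locIdx p q (mem_clist_right p q (Fin.last _))).trans hgl.symm)
    exact congrArg Fin.val this
  comm := by
    intro j
    show eInv ((clist p q).get (Fin.cast (clist_len p q)
      (Fin.cast (clist_len p q).symm (locIdx p q (mem_clist_right p q j))))) = q.pts j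
    have hc : (Fin.cast (clist_len p q)
        (Fin.cast (clist_len p q).symm (locIdx p q (mem_clist_right p q j)))) =
        locIdx p q (mem_clist_right p q j) := rfl
    rw [hc, get_locIdx, eInv_e]

end Aux1


namespace Aux1

lemma le1_refl (x : D) : le1 x x := (le1_iff x x).mpr le_rfl

lemma le1_of_lt1 {x y : D} (h : lt1 x y) : le1 x y :=
  (le1_iff _ _).mpr ((lt1_iff _ _).mp h).le

lemma le1_trans {x y z : D} (h1 : le1 x y) (h2 : le1 y z) : le1 x z :=
  (le1_iff _ _).mpr (((le1_iff _ _).mp h1).trans ((le1_iff _ _).mp h2))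

lemma sub_nonneg1 {x y : D} (h : le1 x y) : le1 0 (y - x) := by
  rw [le1_iff] at h ⊢
  rw [map_sub, map_zero]
  exact sub_nonneg.mpr h

lemma one_nonneg1 : le1 0 (1 : D) := by
  left
  simp only [TrivSqZeroExt.fst_zero, TrivSqZeroExt.fst_one]
  norm_num

lemma sum_le1 {ι : Type*} (s : Finset ι) (F G : ι → D) (h : ∀ j ∈ s, le1 (F j) (G j)) :
    le1 (∑ j ∈ s, F j) (∑ j ∈ s, G j) := by
  rw [le1_iff, map_sum, map_sum]
  exact Finset.sum_le_sum (fun j hj => (le1_iff _ _).mp (h j hj))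

lemma inl_inr_le1 {r r' s s' : ℝ} (h1 : r ≤ r') (h2 : s ≤ s') :
    le1 (TrivSqZeroExt.inl r + TrivSqZeroExt.inr s)
        (TrivSqZeroExt.inl r' + TrivSqZeroExt.inr s') := by
  rcases eq_or_lt_of_le h1 with rfl | h
  · right
    constructor
    · simp
    · simpa using h2
  · left
    simpa using h

variable {aa bb : D}

lemma pts_mono (p : Partition1 aa bb) {j j' : Fin (p.N + 1)} (h : j ≤ j') :
    le1 (p.pts j) (p.pts j') :=
  (le1_iff _ _).mpr ((pts_strictMonoE p).monotone h)

variable {n : ℕ} {a b : Fin n → D}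

lemma vol_nonneg (P : MPart a b) (J : ∀ i, Fin (P i).N) : le1 0 (vol P J) := by
  rw [vol]
  refine Finset.prod_induction _ (le1 0) (fun v w hv hw => mul_nonneg1 hv hw)
    one_nonneg1 ?_
  intro i _
  exact sub_nonneg1 (le1_of_lt1 ((P i).mono (J i)))

lemma subrect_subset_rect (P : MPart a b) (J : ∀ i, Fin (P i).N) :
    subrect P J ⊆ Rect a b := by
  intro x hx i
  constructor
  · have h := pts_mono (P i) (Fin.zero_le (J i).castSucc)
    rw [(P i).first] at h
    exact le1_trans h (hx i).1
  · have h := pts_mono (P i) (Fin.le_last (J i).succ)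
    rw [(P i).last] at h
    exact le1_trans (hx i).2 h

lemma subrect_nonempty (P : MPart a b) (J : ∀ i, Fin (P i).N) :
    (subrect P J).Nonempty := by
  refine ⟨fun i => (P i).pts (J i).castSucc, fun i => ⟨le1_refl _, ?_⟩⟩
  exact le1_of_lt1 ((P i).mono (J i))

lemma subrect_refines (P R : MPart a b) (hR : ∀ i, Refines (P i) (R i))
    (K : ∀ i, Fin (R i).N) :
    subrect R K ⊆ subrect P (fun i => (hR i).idx (K i)) := by
  intro x hx i
  constructor
  · refine le1_trans ?_ (hx i).1
    rw [← (hR i).comm]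
    refine pts_mono _ ?_
    rw [Fin.le_def]
    exact (hR i).idx_le (K i)
  · refine le1_trans (hx i).2 ?_
    rw [← (hR i).comm]
    refine pts_mono _ ?_
    rw [Fin.le_def]
    exact (hR i).lt_idx (K i)

lemma sum_identity (P R : MPart a b) (hR : ∀ i, Refines (P i) (R i))
    (c : (∀ i, Fin (P i).N) → D) :
    ∑ J, c J * vol P J = ∑ K, c (fun i => (hR i).idx (K i)) * vol R K := by
  classical
  have volP : ∀ J : (∀ i, Fin (P i).N), vol P J =
      ∑ K ∈ Fintype.piFinset
        (fun i => Finset.univ.filter fun k : Fin (R i).N => (hR i).idx k = J i),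
        vol R K := by
    intro J
    have h1 : vol P J = ∏ i, ∑ k ∈ Finset.univ.filter
        (fun k : Fin (R i).N => (hR i).idx k = J i),
        ((R i).pts k.succ - (R i).pts k.castSucc) :=
      Finset.prod_congr rfl (fun i _ => ((hR i).tele (J i)).symm)
    rw [h1, Finset.prod_univ_sum]
    rfl
  calc ∑ J, c J * vol P J
      = ∑ J : (∀ i, Fin (P i).N), ∑ K ∈ Finset.univ.filter
          (fun K : (∀ i, Fin (R i).N) => (fun i => (hR i).idx (K i)) = J),
          c (fun i => (hR i).idx (K i)) * vol R K := by
        refine Finset.sum_congr rfl (fun J _ => ?_)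
        rw [volP J, Finset.mul_sum]
        refine Finset.sum_congr ?_ ?_
        · ext K
          simp only [Fintype.mem_piFinset, Finset.mem_filter, Finset.mem_univ, true_and]
          exact funext_iff.symm
        · intro K hK
          rw [Finset.mem_filter] at hK
          rw [hK.2]
    _ = ∑ K, c (fun i => (hR i).idx (K i)) * vol R K :=
        Finset.sum_fiberwise _ _ _

end Aux1

/-- Every type 1 lower sum is type-1 ≤ every type 1 upper sum. -/
theorem lower_le_upper {n : ℕ} (a b : Fin n → D) (hab : ∀ i, lt1 (a i) (b i))
    (f : (Fin n → D) → D)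
    (hbd : ∃ m M : ℝ, ∀ x ∈ Rect a b,
      m ≤ (f x).fst ∧ (f x).fst ≤ M ∧ m ≤ (f x).snd ∧ (f x).snd ≤ M)
    (P Q : MPart a b) :
    le1 (L1 P f) (U1 Q f) := by
  classical
  obtain ⟨m, M, hmM⟩ := hbd
  set R : MPart a b := fun i => Aux1.common (P i) (Q i) with hRdef
  have hRP : ∀ i, Aux1.Refines (P i) (R i) := fun i => Aux1.refinesLeft (P i) (Q i)
  have hRQ : ∀ i, Aux1.Refines (Q i) (R i) := fun i => Aux1.refinesRight (P i) (Q i)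
  have hbddB1 : ∀ S : Set (Fin n → D), S ⊆ Rect a b →
      BddBelow ((fun x => (f x).fst) '' S) := by
    intro S hS
    exact ⟨m, by rintro y ⟨x, hx, rfl⟩; exact (hmM x (hS hx)).1⟩
  have hbddB2 : ∀ S : Set (Fin n → D), S ⊆ Rect a b →
      BddBelow ((fun x => (f x).snd) '' S) := by
    intro S hS
    exact ⟨m, by rintro y ⟨x, hx, rfl⟩; exact (hmM x (hS hx)).2.2.1⟩
  have hbddA1 : ∀ S : Set (Fin n → D), S ⊆ Rect a b →
      BddAbove ((fun x => (f x).fst) '' S) := by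
    intro S hS
    exact ⟨M, by rintro y ⟨x, hx, rfl⟩; exact (hmM x (hS hx)).2.1⟩
  have hbddA2 : ∀ S : Set (Fin n → D), S ⊆ Rect a b →
      BddAbove ((fun x => (f x).snd) '' S) := by
    intro S hS
    exact ⟨M, by rintro y ⟨x, hx, rfl⟩; exact (hmM x (hS hx)).2.2.2⟩
  set cPi : (∀ i, Fin (P i).N) → D := fun J =>
    TrivSqZeroExt.inl (sInf ((fun x => (f x).fst) '' subrect P J)) +
    TrivSqZeroExt.inr (sInf ((fun x => (f x).snd) '' subrect P J)) with hcPi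
  set cRi : (∀ i, Fin (R i).N) → D := fun K =>
    TrivSqZeroExt.inl (sInf ((fun x => (f x).fst) '' subrect R K)) +
    TrivSqZeroExt.inr (sInf ((fun x => (f x).snd) '' subrect R K)) with hcRi
  set cRs : (∀ i, Fin (R i).N) → D := fun K =>
    TrivSqZeroExt.inl (sSup ((fun x => (f x).fst) '' subrect R K)) +
    TrivSqZeroExt.inr (sSup ((fun x => (f x).snd) '' subrect R K)) with hcRs
  set cQs : (∀ i, Fin (Q i).N) → D := fun J =>
    TrivSqZeroExt.inl (sSup ((fun x => (f x).fst) '' subrect Q J)) +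
    TrivSqZeroExt.inr (sSup ((fun x => (f x).snd) '' subrect Q J)) with hcQs
  have hL1P : L1 P f = ∑ J, cPi J * vol P J := rfl
  have hL1R : L1 R f = ∑ K, cRi K * vol R K := rfl
  have hU1R : U1 R f = ∑ K, cRs K * vol R K := rfl
  have hU1Q : U1 Q f = ∑ J, cQs J * vol Q J := rfl
  have h1 : le1 (L1 P f) (L1 R f) := by
    rw [hL1P, hL1R, Aux1.sum_identity P R hRP cPi]
    refine Aux1.sum_le1 _ _ _ (fun K _ => ?_)
    refine Aux1.mul_le_mul_right1 ?_ (Aux1.vol_nonneg R K)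
    refine Aux1.inl_inr_le1 ?_ ?_
    · exact csInf_le_csInf (hbddB1 _ (Aux1.subrect_subset_rect P _))
        ((Aux1.subrect_nonempty R K).image _)
        (Set.image_mono (Aux1.subrect_refines P R hRP K))
    · exact csInf_le_csInf (hbddB2 _ (Aux1.subrect_subset_rect P _))
        ((Aux1.subrect_nonempty R K).image _)
        (Set.image_mono (Aux1.subrect_refines P R hRP K))
  have h2 : le1 (L1 R f) (U1 R f) := by
    rw [hL1R, hU1R]
    refine Aux1.sum_le1 _ _ _ (fun K _ => ?_)
    refine Aux1.mul_le_mul_right1 ?_ (Aux1.vol_nonneg R K)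
    refine Aux1.inl_inr_le1 ?_ ?_
    · exact csInf_le_csSup ((Aux1.subrect_nonempty R K).image _)
        (hbddB1 _ (Aux1.subrect_subset_rect R _))
        (hbddA1 _ (Aux1.subrect_subset_rect R _))
    · exact csInf_le_csSup ((Aux1.subrect_nonempty R K).image _)
        (hbddB2 _ (Aux1.subrect_subset_rect R _))
        (hbddA2 _ (Aux1.subrect_subset_rect R _))
  have h3 : le1 (U1 R f) (U1 Q f) := by
    rw [hU1R, hU1Q, Aux1.sum_identity Q R hRQ cQs]
    refine Aux1.sum_le1 _ _ _ (fun K _ => ?_)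
    refine Aux1.mul_le_mul_right1 ?_ (Aux1.vol_nonneg R K)
    refine Aux1.inl_inr_le1 ?_ ?_
    · exact csSup_le_csSup (hbddA1 _ (Aux1.subrect_subset_rect Q _))
        ((Aux1.subrect_nonempty R K).image _)
        (Set.image_mono (Aux1.subrect_refines Q R hRQ K))
    · exact csSup_le_csSup (hbddA2 _ (Aux1.subrect_subset_rect Q _))
        ((Aux1.subrect_nonempty R K).image _)
        (Set.image_mono (Aux1.subrect_refines Q R hRQ K))
  exact Aux1.le1_trans h1 (Aux1.le1_trans h2 h3)
end
end
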